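/- If the domain of a partial function f : ℕ →. ℕ is computably enumerable, then f is subTuring equivalent to a total function. More generally, if the characteristic function of dom(f) satisfies χ_{dom(f)} ≤subT f, then f is subTuring equivalent to a total function. -/

import Mathlib

open Classical

noncomputable section

/-- `as` is a valid answer history for the sequential oracle computation of `Φ`
with oracle `g` on input `n`: at each round `k`, the machine outputs a query
`(false, q)` with `q` in the domain of `g`, answered by `g q = as[k]`. -/
def ValidHist (Φ : List ℕ →. Bool × ℕ) (g : ℕ →. ℕ) (n : ℕ) (as : List ℕ) : Prop :=
  ∀ (k : ℕ) (hk : k < as.length), ∃ q : ℕ,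
    (false, q) ∈ Φ (n :: as.take k) ∧ (as[k]'hk) ∈ g q

/-- The sequential oracle computation `Φ[g](n)` halts with output `m`. -/
def HaltsTo (Φ : List ℕ →. Bool × ℕ) (g : ℕ →. ℕ) (n m : ℕ) : Prop :=
  ∃ as : List ℕ, ValidHist Φ g n as ∧ (true, m) ∈ Φ (n :: as)

/-- subTuring reducibility: `f ⊆ Φ[g]` for some partial computable `Φ`. -/
def SubTuringLE (f g : ℕ →. ℕ) : Prop :=
  ∃ Φ : List ℕ →. Bool × ℕ, Partrec Φ ∧ ∀ n m, m ∈ f n → HaltsTo Φ g n m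

/-- subTuring equivalence. -/
def SubTuringEquiv (f g : ℕ →. ℕ) : Prop := SubTuringLE f g ∧ SubTuringLE g f

/-- A set of naturals is computably enumerable. -/
def CEPred (S : Set ℕ) : Prop :=
  Partrec fun n => Part.assert (n ∈ S) fun _ => Part.some 0

/-! ### Auxiliary machinery -/

open Nat.Partrec (Code)
open Nat.Partrec.Code

/-- Enumeration of the domain of code `c` : `enumOf c (pair s n) = some n`
iff `evaln s c n` converges. -/
def enumOf (c : Code) (k : ℕ) : Option ℕ :=
  if (evaln k.unpair.1 c k.unpair.2).isSome then some k.unpair.2 else none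

theorem enumOf_sound {c : Code} {k n : ℕ} (h : enumOf c k = some n) :
    (eval c n).Dom := by
  unfold enumOf at h
  split at h
  · next hs =>
    cases hk : (evaln k.unpair.1 c k.unpair.2) with
    | none => rw [hk] at hs; simp at hs
    | some x =>
      cases h
      exact Part.dom_iff_mem.2
        ⟨x, evaln_sound (by rw [hk]; exact rfl : x ∈ evaln k.unpair.1 c k.unpair.2)⟩
  · simp at h

theorem enumOf_complete {c : Code} {n : ℕ} (h : (eval c n).Dom) :
    ∃ k, enumOf c k = some n := by
  obtain ⟨s, hs⟩ := evaln_complete.1 (Part.get_mem h)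
  refine ⟨Nat.pair s n, ?_⟩
  unfold enumOf
  simp only [Nat.unpair_pair]
  rw [if_pos]
  exact Option.isSome_iff_exists.2 ⟨_, hs⟩

/-- The total function listing the graph of `f`, given a code `c` whose domain
is the domain of `f`. -/
noncomputable def tGraph (f : ℕ →. ℕ) (c : Code) (k : ℕ) : ℕ :=
  match enumOf c k with
  | some n => if h : (f n).Dom then Nat.pair (n + 1) ((f n).get h) else 0
  | none => 0

/-- Machine computing `f` from the graph listing. -/
def phiA : List ℕ → Bool × ℕ
  | [] => (true, 0)
  | n :: as =>
    if as.findIdx (fun x => x.unpair.1 == n + 1) < as.length then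
      (true, (as.getD (as.findIdx fun x => x.unpair.1 == n + 1) 0).unpair.2)
    else (false, as.length)

/-- Machine computing the graph listing from `f`. -/
def phiB (c : Code) : List ℕ → Bool × ℕ
  | [] => (true, 0)
  | k :: as =>
    match enumOf c k with
    | none => (true, 0)
    | some n =>
      match as with
      | [] => (false, n)
      | a :: _ => (true, Nat.pair (n + 1) a)

/-- Machine computing `f` from `n ↦ f n + 1 on dom, 0 off dom`. -/
def phi1 : List ℕ → Bool × ℕ
  | [] => (true, 0)
  | _ :: [] => (false, 0)
  | _ :: a :: _ => (true, a - 1)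

def phi1' : List ℕ → Bool × ℕ
  | [] => (true, 0)
  | n :: [] => (false, n)
  | _ :: a :: _ => (true, a - 1)

/-- One step of the machine simulating `Ψ` and then querying `f` once:
state is `(n, pre, rest)` where `pre` is the already-processed history and
`rest` the remaining history. -/
def stepFun (s : ℕ × List ℕ × List ℕ) (v : Bool × ℕ) :
    (Bool × ℕ) ⊕ (ℕ × List ℕ × List ℕ) :=
  cond v.1
    (cond (v.2 == 0) (Sum.inl (true, 0))
      (s.2.2.casesOn (Sum.inl (false, s.1)) fun a _ => Sum.inl (true, a + 1)))
    (s.2.2.casesOn (Sum.inl (false, v.2)) fun a r => Sum.inr (s.1, s.2.1 ++ [a], r))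

def stepP (Ψ : List ℕ →. Bool × ℕ) (s : ℕ × List ℕ × List ℕ) :
    Part ((Bool × ℕ) ⊕ (ℕ × List ℕ × List ℕ)) :=
  (Ψ (s.1 :: s.2.1)).map (stepFun s)

def Phi2 (Ψ : List ℕ →. Bool × ℕ) : List ℕ →. Bool × ℕ := fun l =>
  PFun.fix (stepP Ψ) (l.headI, [], l.tail)

theorem Phi2_cons (Ψ : List ℕ →. Bool × ℕ) (n : ℕ) (as : List ℕ) :
    Phi2 Ψ (n :: as) = PFun.fix (stepP Ψ) (n, [], as) := rfl

theorem mem_stepP {Ψ : List ℕ →. Bool × ℕ} {v : Bool × ℕ}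
    {s : ℕ × List ℕ × List ℕ} (hv : v ∈ Ψ (s.1 :: s.2.1)) :
    stepFun s v ∈ stepP Ψ s :=
  Part.mem_map _ hv

theorem fix_terminal {Ψ : List ℕ →. Bool × ℕ} {v x : Bool × ℕ}
    {s : ℕ × List ℕ × List ℕ} (hv : v ∈ Ψ (s.1 :: s.2.1))
    (hx : stepFun s v = Sum.inl x) :
    x ∈ PFun.fix (stepP Ψ) s :=
  PFun.mem_fix_iff.2 (Or.inl (hx ▸ mem_stepP hv))

theorem fix_walk (Ψ : List ℕ →. Bool × ℕ) (n : ℕ) :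
    ∀ (r p rest2 : List ℕ),
      (∀ j, j < r.length → ∃ q, (false, q) ∈ Ψ (n :: (p ++ r.take j))) →
      ∀ x, x ∈ PFun.fix (stepP Ψ) (n, p ++ r, rest2) →
        x ∈ PFun.fix (stepP Ψ) (n, p, r ++ rest2)
  | [], p, rest2, _, x, hx => by simpa using hx
  | a :: r', p, rest2, H, x, hx => by
    obtain ⟨q, hq⟩ := H 0 (by simp)
    simp only [List.take_zero, List.append_nil] at hq
    have h1 : x ∈ PFun.fix (stepP Ψ) (n, p ++ [a], r' ++ rest2) := by
      refine fix_walk Ψ n r' (p ++ [a]) rest2 (fun j hj => ?_) x ?_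
      · obtain ⟨q', hq'⟩ := H (j + 1) (by simpa using Nat.succ_lt_succ hj)
        exact ⟨q', by simpa [List.append_assoc] using hq'⟩
      · simpa [List.append_assoc] using hx
    refine PFun.mem_fix_iff.2 (Or.inr ⟨(n, p ++ [a], r' ++ rest2), ?_, h1⟩)
    have := mem_stepP (s := (n, p, a :: (r' ++ rest2))) (v := (false, q)) hq
    simpa [stepFun] using this

/-! ### Computability of the machines -/

theorem computable_phiA : Computable phiA := by
  have hp : Primrec₂ fun (a : List ℕ × (ℕ × List ℕ)) (x : ℕ) =>
      x.unpair.1 == a.2.1 + 1 :=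
    Primrec.to₂ <| Primrec.beq.comp
      ((Primrec.fst.comp Primrec.unpair).comp Primrec.snd)
      (Primrec.succ.comp (Primrec.fst.comp (Primrec.snd.comp Primrec.fst)))
  have hlist : Primrec fun (a : List ℕ × (ℕ × List ℕ)) => a.2.2 :=
    Primrec.snd.comp Primrec.snd
  have hfid : Primrec fun (a : List ℕ × (ℕ × List ℕ)) =>
      a.2.2.findIdx fun x => x.unpair.1 == a.2.1 + 1 :=
    Primrec.list_findIdx hlist hp
  have hlen : Primrec fun (a : List ℕ × (ℕ × List ℕ)) => a.2.2.length :=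
    Primrec.list_length.comp hlist
  have hbody : Primrec₂ fun (_ : List ℕ) (p : ℕ × List ℕ) =>
      if p.2.findIdx (fun x => x.unpair.1 == p.1 + 1) < p.2.length then
        ((true, (p.2.getD (p.2.findIdx fun x => x.unpair.1 == p.1 + 1) 0).unpair.2) : Bool × ℕ)
      else (false, p.2.length) :=
    Primrec.to₂ <| Primrec.ite (Primrec.nat_lt.comp hfid hlen)
      (Primrec.pair (Primrec.const true)
        ((Primrec.snd.comp Primrec.unpair).comp
          ((Primrec.list_getD 0).comp hlist hfid)))
      (Primrec.pair (Primrec.const false) hlen)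
  have h : Primrec phiA :=
    (Primrec.list_casesOn Primrec.id (Primrec.const ((true, 0) : Bool × ℕ))
      hbody).of_eq fun l => by cases l <;> rfl
  exact h.to_comp

theorem primrec_enumOf (c : Code) : Primrec (enumOf c) := by
  have hevaln : Primrec fun k : ℕ => evaln k.unpair.1 c k.unpair.2 :=
    primrec_evaln.comp (Primrec.pair
      (Primrec.pair (Primrec.fst.comp Primrec.unpair) (Primrec.const c))
      (Primrec.snd.comp Primrec.unpair))
  refine (Primrec.cond (Primrec.option_isSome.comp hevaln)
    (Primrec.option_some.comp (Primrec.snd.comp Primrec.unpair))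
    (Primrec.const none)).of_eq fun k => ?_
  unfold enumOf
  cases h : (evaln k.unpair.1 c k.unpair.2).isSome <;> simp [h]

theorem computable_phiB (c : Code) : Computable (phiB c) := by
  have hbody3 : Primrec₂ fun (a : (List ℕ × (ℕ × List ℕ)) × ℕ) (p : ℕ × List ℕ) =>
      ((true, Nat.pair (a.2 + 1) p.1) : Bool × ℕ) :=
    Primrec.to₂ <| Primrec.pair (Primrec.const true)
      (Primrec₂.comp Primrec₂.natPair (Primrec.succ.comp (Primrec.snd.comp Primrec.fst))
        (Primrec.fst.comp Primrec.snd))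
  have hbody2 : Primrec₂ fun (a : List ℕ × (ℕ × List ℕ)) (n : ℕ) =>
      ((a.2.2.casesOn ((false, n) : Bool × ℕ) fun x _ =>
        ((true, Nat.pair (n + 1) x) : Bool × ℕ)) : Bool × ℕ) :=
    Primrec.to₂ <| Primrec.list_casesOn
      ((Primrec.snd.comp Primrec.snd).comp Primrec.fst)
      (Primrec.pair (Primrec.const false) Primrec.snd) hbody3
  have hbody : Primrec₂ fun (_ : List ℕ) (p : ℕ × List ℕ) =>
      (((enumOf c p.1).casesOn ((true, 0) : Bool × ℕ) fun n =>
        ((p.2.casesOn ((false, n) : Bool × ℕ) fun x _ =>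
          ((true, Nat.pair (n + 1) x) : Bool × ℕ)) : Bool × ℕ)) : Bool × ℕ) :=
    Primrec.to₂ <| Primrec.option_casesOn
      ((primrec_enumOf c).comp (Primrec.fst.comp Primrec.snd))
      (Primrec.const ((true, 0) : Bool × ℕ)) hbody2
  have h : Primrec (phiB c) :=
    (Primrec.list_casesOn Primrec.id (Primrec.const ((true, 0) : Bool × ℕ))
      hbody).of_eq fun l => by
        rcases l with - | ⟨k, as⟩
        · rfl
        · cases h : enumOf c k <;> cases as <;> simp [phiB, h]
  exact h.to_comp

theorem computable_phi1' : Computable phi1' := by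
  have hinner : Primrec₂ fun (a : List ℕ × (ℕ × List ℕ)) (p : ℕ × List ℕ) =>
      ((true, p.1 - 1) : Bool × ℕ) :=
    Primrec.to₂ <| Primrec.pair (Primrec.const true)
      (Primrec.pred.comp (Primrec.fst.comp Primrec.snd))
  have hbody : Primrec₂ fun (_ : List ℕ) (p : ℕ × List ℕ) =>
      ((p.2.casesOn ((false, p.1) : Bool × ℕ) fun a _ =>
        ((true, a - 1) : Bool × ℕ)) : Bool × ℕ) :=
    Primrec.to₂ <| Primrec.list_casesOn (Primrec.snd.comp Primrec.snd)
      (Primrec.pair (Primrec.const false) (Primrec.fst.comp Primrec.snd)) hinner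
  have h : Primrec phi1' :=
    (Primrec.list_casesOn Primrec.id (Primrec.const ((true, 0) : Bool × ℕ))
      hbody).of_eq fun l => by
        rcases l with - | ⟨n, as⟩
        · rfl
        · cases as <;> rfl
  exact h.to_comp

set_option maxHeartbeats 2000000 in
theorem computable_stepFun : Computable₂ stepFun := by
  have sn : Primrec fun (a : (ℕ × List ℕ × List ℕ) × Bool × ℕ) => a.1.1 :=
    Primrec.fst.comp Primrec.fst
  have spre : Primrec fun (a : (ℕ × List ℕ × List ℕ) × Bool × ℕ) => a.1.2.1 :=
    Primrec.fst.comp (Primrec.snd.comp Primrec.fst)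
  have srest : Primrec fun (a : (ℕ × List ℕ × List ℕ) × Bool × ℕ) => a.1.2.2 :=
    Primrec.snd.comp (Primrec.snd.comp Primrec.fst)
  have sv1 : Primrec fun (a : (ℕ × List ℕ × List ℕ) × Bool × ℕ) => a.2.1 :=
    Primrec.fst.comp Primrec.snd
  have sv2 : Primrec fun (a : (ℕ × List ℕ × List ℕ) × Bool × ℕ) => a.2.2 :=
    Primrec.snd.comp Primrec.snd
  have hb1 : Primrec fun (a : (ℕ × List ℕ × List ℕ) × Bool × ℕ) =>
      ((a.1.2.2.casesOn (Sum.inl (false, a.1.1) :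
          (Bool × ℕ) ⊕ (ℕ × List ℕ × List ℕ)) fun x _ =>
            (Sum.inl (true, x + 1) : (Bool × ℕ) ⊕ (ℕ × List ℕ × List ℕ))) :
          (Bool × ℕ) ⊕ (ℕ × List ℕ × List ℕ)) :=
    Primrec.list_casesOn srest
      (Primrec.sumInl.comp (Primrec.pair (Primrec.const false) sn))
      (Primrec.to₂ <| Primrec.sumInl.comp
        (Primrec.pair (Primrec.const true)
          (Primrec.succ.comp (Primrec.fst.comp Primrec.snd))))
  have hb2 : Primrec fun (a : (ℕ × List ℕ × List ℕ) × Bool × ℕ) =>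
      ((a.1.2.2.casesOn (Sum.inl (false, a.2.2) :
          (Bool × ℕ) ⊕ (ℕ × List ℕ × List ℕ)) fun x r =>
            (Sum.inr (a.1.1, a.1.2.1 ++ [x], r) :
              (Bool × ℕ) ⊕ (ℕ × List ℕ × List ℕ))) :
          (Bool × ℕ) ⊕ (ℕ × List ℕ × List ℕ)) :=
    Primrec.list_casesOn srest
      (Primrec.sumInl.comp (Primrec.pair (Primrec.const false) sv2))
      (Primrec.to₂ <| Primrec.sumInr.comp
        (Primrec.pair (sn.comp Primrec.fst)
          (Primrec.pair
            (Primrec.list_concat.comp (spre.comp Primrec.fst)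
              (Primrec.fst.comp Primrec.snd))
            (Primrec.snd.comp Primrec.snd))))
  have h : Primrec₂ stepFun :=
    Primrec.to₂ <| Primrec.cond sv1
      (Primrec.cond (Primrec.beq.comp sv2 (Primrec.const 0))
        (Primrec.const (Sum.inl ((true, 0) : Bool × ℕ))) hb1)
      hb2
  exact h.to_comp

theorem partrec_Phi2 {Ψ : List ℕ →. Bool × ℕ} (hΨ : Partrec Ψ) :
    Partrec (Phi2 Ψ) := by
  have hcons : Computable fun (s : ℕ × List ℕ × List ℕ) => s.1 :: s.2.1 :=
    (Primrec.list_cons.comp Primrec.fst (Primrec.fst.comp Primrec.snd)).to_comp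
  have hstep : Partrec (stepP Ψ) :=
    Partrec.map (hΨ.comp hcons) computable_stepFun
  have hinit : Computable fun (l : List ℕ) =>
      (l.headI, (([] : List ℕ), l.tail)) :=
    (Primrec.pair Primrec.list_headI
      (Primrec.pair (Primrec.const []) Primrec.list_tail)).to_comp
  exact (hstep.fix).comp hinit

/-! ### List helper lemmas -/

theorem findIdx_all_false {p : ℕ → Bool} :
    ∀ {l : List ℕ}, (∀ x ∈ l, p x = false) → l.findIdx p = l.length := by
  intro l
  induction l with
  | nil => simp
  | cons a l ih =>
    intro h
    have ha := h a (by simp)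
    simp [List.findIdx_cons, ha, ih fun x hx => h x (List.mem_cons_of_mem _ hx)]

theorem findIdx_concat_true {p : ℕ → Bool} {l : List ℕ} {x : ℕ}
    (hl : ∀ y ∈ l, p y = false) (hx : p x = true) :
    (l ++ [x]).findIdx p = l.length := by
  induction l with
  | nil => simp [List.findIdx_cons, hx]
  | cons a l ih =>
    have ha := hl a (by simp)
    simp [List.findIdx_cons, ha, ih fun y hy => hl y (List.mem_cons_of_mem _ hy)]

theorem getD_concat (l : List ℕ) (x : ℕ) : (l ++ [x]).getD l.length 0 = x := by
  induction l with
  | nil => rfl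
  | cons a l ih => simpa using ih

/-! ### Main theorem -/

theorem ce_domain_total_degree (f : ℕ →. ℕ) :
    (CEPred f.Dom → ∃ t : ℕ → ℕ, SubTuringEquiv f (t : ℕ →. ℕ)) ∧
    (SubTuringLE (fun n => Part.some (if n ∈ f.Dom then 1 else 0)) f →
      ∃ t : ℕ → ℕ, SubTuringEquiv f (t : ℕ →. ℕ)) := by
  constructor
  · -- CE case
    intro hce
    obtain ⟨c, hc⟩ := exists_code.1 (Partrec.nat_iff.1 hce)
    have hdom : ∀ n, (eval c n).Dom ↔ (f n).Dom := by
      intro n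
      rw [hc]
      constructor
      · rintro ⟨h, -⟩; exact h
      · intro h; exact ⟨h, trivial⟩
    set t := tGraph f c with ht
    refine ⟨t, ⟨fun l => Part.some (phiA l), computable_phiA.partrec, ?_⟩,
      ⟨fun l => Part.some (phiB c l), (computable_phiB c).partrec, ?_⟩⟩
    · -- f ≤ t via phiA
      intro n m hm
      have hfd : (f n).Dom := Part.dom_iff_mem.2 ⟨m, hm⟩
      have hex : ∃ k, enumOf c k = some n := enumOf_complete ((hdom n).2 hfd)
      classical
      set k0 := Nat.find hex with hk0
      have hk0e : enumOf c k0 = some n := Nat.find_spec hex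
      have htk0 : t k0 = Nat.pair (n + 1) ((f n).get hfd) := by
        rw [ht]; unfold tGraph; rw [hk0e]; simp [hfd]
      have hfail : ∀ j, j < k0 → ((t j).unpair.1 == n + 1) = false := by
        intro j hj
        have hne : enumOf c j ≠ some n := Nat.find_min hex hj
        rw [ht]; unfold tGraph
        cases he : enumOf c j with
        | none => simp
        | some n' =>
          have hd' : (f n').Dom := (hdom n').1 (enumOf_sound he)
          have : n' ≠ n := fun h => hne (h ▸ he)
          simp [hd', Nat.unpair_pair, this]
      set as : List ℕ := (List.range (k0 + 1)).map t with has
      have hlen : as.length = k0 + 1 := by simp [has]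
      refine ⟨as, ?_, ?_⟩
      · -- valid history
        intro k hk
        refine ⟨k, ?_, ?_⟩
        · have htake : as.take k = (List.range k).map t := by
            rw [has, ← List.map_take, List.take_range,
              Nat.min_eq_left (by rw [hlen] at hk; omega)]
          rw [htake]
          have hfid : ((List.range k).map t).findIdx
              (fun x => x.unpair.1 == n + 1) = k := by
            have := findIdx_all_false (p := fun x => x.unpair.1 == n + 1)
              (l := (List.range k).map t) ?_
            · simpa using this
            · intro x hx
              obtain ⟨j, hj, rfl⟩ := List.mem_map.1 hx
              exact hfail j (by
                have := List.mem_range.1 hj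
                have hk' : k ≤ k0 := by rw [hlen] at hk; omega
                omega)
          show (false, k) ∈ Part.some (phiA (n :: (List.range k).map t))
          simp only [phiA]
          rw [hfid]
          simp
        · have : as[k]'hk = t k := by
            simp [has]
          rw [this]
          exact Part.mem_some _
      · -- halting
        have hsplit : as = (List.range k0).map t ++ [t k0] := by
          rw [has, List.range_succ, List.map_append]; rfl
        have hfid : as.findIdx (fun x => x.unpair.1 == n + 1) = k0 := by
          rw [hsplit]
          have := findIdx_concat_true (p := fun x => x.unpair.1 == n + 1)
            (l := (List.range k0).map t) (x := t k0) ?_ ?_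
          · simpa using this
          · intro y hy
            obtain ⟨j, hj, rfl⟩ := List.mem_map.1 hy
            exact hfail j (List.mem_range.1 hj)
          · rw [htk0]; simp [Nat.unpair_pair]
        have hget : as.getD k0 0 = t k0 := by
          rw [hsplit]
          simpa using getD_concat ((List.range k0).map t) (t k0)
        show (true, m) ∈ Part.some (phiA (n :: as))
        simp only [phiA]
        rw [hfid, hget, htk0]
        have hmk : m = (f n).get hfd := (Part.get_eq_of_mem hm hfd).symm
        rw [if_pos (by rw [hlen]; omega)]
        simp [Nat.unpair_pair, hmk]
    · -- t ≤ f via phiB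
      intro k m hm
      have hmt : m = t k := by
        simpa [PFun.coe_val] using hm
      cases he : enumOf c k with
      | none =>
        refine ⟨[], fun j hj => by simp at hj, ?_⟩
        show (true, m) ∈ Part.some (phiB c (k :: []))
        have : t k = 0 := by rw [ht]; unfold tGraph; rw [he]
        simp only [phiB]
        rw [he]
        simp [hmt, this]
      | some n =>
        have hd : (f n).Dom := (hdom n).1 (enumOf_sound he)
        refine ⟨[(f n).get hd], ?_, ?_⟩
        · intro j hj
          have hj0 : j = 0 := by simpa using hj
          subst hj0
          refine ⟨n, ?_, ?_⟩
          · show (false, n) ∈ Part.some (phiB c (k :: []))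
            simp only [phiB]
            rw [he]
            simp
          · simpa using Part.get_mem hd
        · show (true, m) ∈ Part.some (phiB c (k :: [(f n).get hd]))
          have : t k = Nat.pair (n + 1) ((f n).get hd) := by
            rw [ht]; unfold tGraph; rw [he]; simp [hd]
          simp only [phiB]
          rw [he]
          simp [hmt, this]
  · -- χ-reduction case
    intro hχ
    obtain ⟨Ψ, hΨpr, hΨ⟩ := hχ
    set t : ℕ → ℕ := fun n => if h : (f n).Dom then (f n).get h + 1 else 0 with ht
    refine ⟨t, ⟨fun l => Part.some (phi1' l), computable_phi1'.partrec, ?_⟩,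
      ⟨Phi2 Ψ, partrec_Phi2 hΨpr, ?_⟩⟩
    · -- f ≤ t via phi1'
      intro n m hm
      have hfd : (f n).Dom := Part.dom_iff_mem.2 ⟨m, hm⟩
      refine ⟨[t n], ?_, ?_⟩
      · intro j hj
        have hj0 : j = 0 := by simpa using hj
        subst hj0
        refine ⟨n, ?_, ?_⟩
        · show (false, n) ∈ Part.some (phi1' (n :: []))
          simp [phi1']
        · simpa using Part.mem_some _
      · show (true, m) ∈ Part.some (phi1' (n :: [t n]))
        have hmk : m = (f n).get hfd := (Part.get_eq_of_mem hm hfd).symm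
        simp [phi1', ht, hfd, hmk]
    · -- t ≤ f via Phi2
      intro n m hm
      have hmt : m = t n := by simpa [PFun.coe_val] using hm
      have hhalt : HaltsTo Ψ f n (if n ∈ f.Dom then 1 else 0) :=
        hΨ n _ (Part.mem_some _)
      obtain ⟨bs, hbsV, hbsH⟩ := hhalt
      set L := bs.length with hL
      -- key walk: from a fix-membership starting at consumed prefix `bs.take k`
      have hwalk : ∀ (k : ℕ), k ≤ L → ∀ rest2 x,
          x ∈ PFun.fix (stepP Ψ) (n, bs.take k, rest2) →
          x ∈ PFun.fix (stepP Ψ) (n, [], bs.take k ++ rest2) := by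
        intro k hk rest2 x hx
        have := fix_walk Ψ n (bs.take k) [] rest2 ?_ x (by simpa using hx)
        · exact this
        · intro j hj
          have hjk : j < k := by simp at hj; omega
          obtain ⟨q, hq, -⟩ := hbsV j (by omega)
          refine ⟨q, ?_⟩
          have : (bs.take k).take j = bs.take j := by
            rw [List.take_take]
            congr 1
            omega
          simpa [this] using hq
      by_cases hfd : (f n).Dom
      · -- n ∈ dom f : history is bs ++ [f n]
        have hb1 : (true, 1) ∈ Ψ (n :: bs) := by
          have : (if n ∈ f.Dom then 1 else 0) = 1 := if_pos hfd
          rwa [this] at hbsH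
        set a := (f n).get hfd with ha
        refine ⟨bs ++ [a], ?_, ?_⟩
        · intro k hk
          have hk' : k ≤ L := by simp [hL] at hk ⊢; omega
          rcases Nat.lt_or_ge k L with hkL | hkL
          · obtain ⟨q, hq, hqf⟩ := hbsV k hkL
            refine ⟨q, ?_, ?_⟩
            · have htk : (bs ++ [a]).take k = bs.take k := by
                rw [List.take_append_of_le_length (by omega)]
              rw [htk, Phi2_cons]
              have hterm : (false, q) ∈ PFun.fix (stepP Ψ) (n, bs.take k, []) := by
                obtain ⟨q', hq', -⟩ := hbsV k hkL
                have huniq : q' = q := by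
                  have := Part.mem_unique hq' hq
                  simpa using this
                subst huniq
                exact fix_terminal (s := (n, bs.take k, [])) hq' (by simp [stepFun])
              have := hwalk k (by omega) [] _ hterm
              simpa using this
            · have : (bs ++ [a])[k]'hk = bs[k]'hkL :=
                List.getElem_append_left hkL
              rw [this]
              exact hqf
          · have hkL' : k = L := by
              have : k < L + 1 := by simpa [hL] using hk
              omega
            subst hkL'
            refine ⟨n, ?_, ?_⟩
            · have htk : (bs ++ [a]).take L = bs := by
                have : L = bs.length := hL
                rw [this, List.take_left]
              rw [htk, Phi2_cons]
              have hterm : (false, n) ∈ PFun.fix (stepP Ψ) (n, bs, []) :=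
                fix_terminal (s := (n, bs, [])) hb1 (by simp [stepFun])
              have hbt : bs.take L = bs := by rw [hL, List.take_length]
              have := hwalk L (le_refl _) [] _ (by rwa [hbt])
              simpa [hbt] using this
            · have : (bs ++ [a])[L]'hk = a := by
                simp [hL]
              rw [this, ha]
              exact Part.get_mem hfd
        · rw [Phi2_cons]
          have hterm : (true, a + 1) ∈ PFun.fix (stepP Ψ) (n, bs, [a]) :=
            fix_terminal (s := (n, bs, [a])) hb1 (by simp [stepFun])
          have hbt : bs.take L = bs := by rw [hL, List.take_length]
          have := hwalk L (le_refl _) [a] _ (by rwa [hbt])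
          rw [hbt] at this
          have hmv : m = a + 1 := by rw [hmt, ht]; simp [hfd, ha]
          rwa [hmv]
      · -- n ∉ dom f : history is bs, output 0
        have hb0 : (true, 0) ∈ Ψ (n :: bs) := by
          have : (if n ∈ f.Dom then 1 else 0) = 0 := if_neg hfd
          rwa [this] at hbsH
        refine ⟨bs, ?_, ?_⟩
        · intro k hk
          obtain ⟨q, hq, hqf⟩ := hbsV k hk
          refine ⟨q, ?_, hqf⟩
          rw [Phi2_cons]
          have hterm : (false, q) ∈ PFun.fix (stepP Ψ) (n, bs.take k, []) :=
            fix_terminal (s := (n, bs.take k, [])) hq (by simp [stepFun])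
          have := hwalk k (by omega) [] _ hterm
          simpa using this
        · rw [Phi2_cons]
          have hterm : (true, 0) ∈ PFun.fix (stepP Ψ) (n, bs, []) :=
            fix_terminal (s := (n, bs, [])) hb0 (by simp [stepFun])
          have hbt : bs.take L = bs := by rw [hL, List.take_length]
          have := hwalk L (le_refl _) [] _ (by rwa [hbt])
          rw [hbt] at this
          have hmv : m = 0 := by rw [hmt, ht]; simp [hfd]
          simpa [hmv] using this
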